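/- Let A be a commutative monoid object in a symmetric monoidal category V, and λ an automorphism of A as a right A-module. Form the pullback A_λ of e : I → A along λ. Then the A-coring endomorphism of A ⊗ A associated to the invertible subobject (A_λ, i_λ) equals (id_A ⊗ λ^{-1}) ∘ (λ ⊗ id_A) : A ⊗ A → A ⊗ A. -/

import Mathlib

open CategoryTheory MonoidalCategory Limits

/-- Let `A` be a commutative monoid object in a symmetric monoidal category with
pullbacks, and let `l : A ≅ A` be an automorphism of `A` as a right `A`-module.
Let `i : A_l ⟶ A` be the pullback of the unit `e : 𝟙_V ⟶ A` along `l`, and let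
`ξ^l = m ∘ (A ⊗ i)` and `ξ^r = m ∘ (i ⊗ A)` be the induced maps.  Then `ξ^l` and
`ξ^r` are isomorphisms and the associated `A`-coring endomorphism
`(A ⊗ ξ^r) ∘ α ∘ ((ξ^l)⁻¹ ⊗ A)` of the Sweedler coring `A ⊗ A` equals
`(A ⊗ l⁻¹) ∘ (l ⊗ A)`. -/
theorem gamma_of_pullback_unit_along_aut
    {V : Type*} [Category V] [MonoidalCategory V] [SymmetricCategory V]
    [HasPullbacks V] (A : Mon V)
    (hcomm : (β_ A.X A.X).hom ≫ (MonObj.mul (X := A.X)) = (MonObj.mul (X := A.X)))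
    (l : A.X ≅ A.X)
    (hl : (MonObj.mul (X := A.X)) ≫ l.hom = (l.hom ▷ A.X) ≫ (MonObj.mul (X := A.X))) :
    letI P : V := pullback (MonObj.one (X := A.X)) l.hom
    letI i : P ⟶ A.X := pullback.snd (MonObj.one (X := A.X)) l.hom
    letI ξl : A.X ⊗ P ⟶ A.X := (A.X ◁ i) ≫ (MonObj.mul (X := A.X))
    letI ξr : P ⊗ A.X ⟶ A.X := (i ▷ A.X) ≫ (MonObj.mul (X := A.X))
    IsIso ξr ∧
      ∃ ξlinv : A.X ⟶ A.X ⊗ P,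
        ξl ≫ ξlinv = 𝟙 _ ∧ ξlinv ≫ ξl = 𝟙 _ ∧
          (ξlinv ▷ A.X) ≫ (α_ A.X P A.X).hom ≫ (A.X ◁ ξr) =
            (l.hom ▷ A.X) ≫ (A.X ◁ l.inv) := by
  set i : pullback (MonObj.one (X := A.X)) l.hom ⟶ A.X := pullback.snd (MonObj.one (X := A.X)) l.hom with hidef
  set ξl : A.X ⊗ pullback (MonObj.one (X := A.X)) l.hom ⟶ A.X := (A.X ◁ i) ≫ (MonObj.mul (X := A.X)) with hξldef
  set ξr : pullback (MonObj.one (X := A.X)) l.hom ⊗ A.X ⟶ A.X := (i ▷ A.X) ≫ (MonObj.mul (X := A.X)) with hξrdef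
  have hcond : pullback.fst (MonObj.one (X := A.X)) l.hom ≫ (MonObj.one (X := A.X)) = i ≫ l.hom := pullback.condition
  let u : 𝟙_ V ⟶ pullback (MonObj.one (X := A.X)) l.hom := pullback.lift (𝟙 _) ((MonObj.one (X := A.X)) ≫ l.inv) (by simp)
  have hu1 : u ≫ pullback.fst (MonObj.one (X := A.X)) l.hom = 𝟙 _ := pullback.lift_fst _ _ _
  have hu2 : u ≫ i = (MonObj.one (X := A.X)) ≫ l.inv := pullback.lift_snd _ _ _
  have hfu : pullback.fst (MonObj.one (X := A.X)) l.hom ≫ u = 𝟙 (pullback (MonObj.one (X := A.X)) l.hom) := by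
    apply pullback.hom_ext
    · rw [Category.assoc, hu1, Category.comp_id, Category.id_comp]
    · simp only [Category.assoc, Category.id_comp, u, pullback.lift_snd]
      rw [reassoc_of% hcond]
      simp
      exact hidef
  have hi : i = pullback.fst (MonObj.one (X := A.X)) l.hom ≫ (MonObj.one (X := A.X)) ≫ l.inv := by
    rw [reassoc_of% hcond]; simp
  -- `l.inv` commutes with multiplication on both sides
  have hr : (l.inv ▷ A.X) ≫ (MonObj.mul (X := A.X)) = (MonObj.mul (X := A.X)) ≫ l.inv := by
    rw [Iso.eq_comp_inv, Category.assoc, hl, ← MonoidalCategory.comp_whiskerRight_assoc,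
      l.inv_hom_id]
    simp
  have hml : (A.X ◁ l.hom) ≫ (MonObj.mul (X := A.X)) = (MonObj.mul (X := A.X)) ≫ l.hom := by
    have hn : (A.X ◁ l.hom) ≫ (β_ A.X A.X).hom = (β_ A.X A.X).hom ≫ (l.hom ▷ A.X) :=
      (BraidedCategory.braiding_naturality_right A.X l.hom)
    calc (A.X ◁ l.hom) ≫ (MonObj.mul (X := A.X)) = (A.X ◁ l.hom) ≫ (β_ A.X A.X).hom ≫ (MonObj.mul (X := A.X)) := by rw [hcomm]
      _ = (β_ A.X A.X).hom ≫ (l.hom ▷ A.X) ≫ (MonObj.mul (X := A.X)) := by rw [reassoc_of% hn]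
      _ = (β_ A.X A.X).hom ≫ (MonObj.mul (X := A.X)) ≫ l.hom := by rw [hl]
      _ = (MonObj.mul (X := A.X)) ≫ l.hom := by rw [reassoc_of% hcomm]
  have hmli : (A.X ◁ l.inv) ≫ (MonObj.mul (X := A.X)) = (MonObj.mul (X := A.X)) ≫ l.inv := by
    rw [Iso.eq_comp_inv, Category.assoc, ← hml, ← MonoidalCategory.whiskerLeft_comp_assoc,
      l.inv_hom_id]
    simp
  -- closed forms for ξl and ξr
  have hξl : ξl = (A.X ◁ pullback.fst (MonObj.one (X := A.X)) l.hom) ≫ (ρ_ A.X).hom ≫ l.inv := by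
    rw [hξldef, hi]
    simp only [MonoidalCategory.whiskerLeft_comp, Category.assoc, hmli]
    rw [reassoc_of% MonObj.mul_one A.X]
  have hξr : ξr = (pullback.fst (MonObj.one (X := A.X)) l.hom ▷ A.X) ≫ (λ_ A.X).hom ≫ l.inv := by
    rw [hξrdef, hi]
    simp only [MonoidalCategory.comp_whiskerRight, Category.assoc, hr]
    rw [reassoc_of% MonObj.one_mul A.X]
  haveI : IsIso (pullback.fst (MonObj.one (X := A.X)) l.hom) := ⟨u, hfu, hu1⟩
  constructor
  · rw [hξr]; infer_instance
  · refine ⟨l.hom ≫ (ρ_ A.X).inv ≫ (A.X ◁ u), ?_, ?_, ?_⟩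
    · rw [hξl]
      simp only [Category.assoc, Iso.inv_hom_id_assoc, Iso.hom_inv_id_assoc]
      rw [← MonoidalCategory.whiskerLeft_comp, hfu, MonoidalCategory.whiskerLeft_id]
    · rw [hξl]
      simp only [Category.assoc]
      rw [← MonoidalCategory.whiskerLeft_comp_assoc, hu1, MonoidalCategory.whiskerLeft_id]
      simp
    · rw [hξr]
      simp only [MonoidalCategory.comp_whiskerRight, MonoidalCategory.whiskerLeft_comp,
        Category.assoc]
      rw [← MonoidalCategory.whiskerLeft_comp_assoc,
        MonoidalCategory.associator_naturality_middle_assoc,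
        ← MonoidalCategory.whiskerLeft_comp_assoc]
      rw [← MonoidalCategory.comp_whiskerRight_assoc u (pullback.fst (MonObj.one (X := A.X)) l.hom), hu1]
      simp
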